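/- Let h : M_{m×n}(ℂ) × M_{m×n}(ℂ) → ℂ be sesquilinear (complex linear in the first variable, conjugate linear in the second) and Hermitian (h(W,V) = conj(h(V,W))), and suppose h(BVC, BWC) = h(V,W) for all V, W ∈ M_{m×n}(ℂ), all B ∈ U(m) and all C ∈ U(n). Then there exists a real constant c such that h(V,W) = c · tr(V W*) for all V, W ∈ M_{m×n}(ℂ). -/

import Mathlib

open Matrix

/-- every `U(m) × U(n)`-invariant Hermitian sesquilinear form on `M_{m×n}(ℂ)`
is a real constant multiple of `(V,W) ↦ tr(V W*)`. -/
theorem invariant_hermitian_form_typeI (m n : ℕ)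
    (h : Matrix (Fin m) (Fin n) ℂ → Matrix (Fin m) (Fin n) ℂ → ℂ)
    (hadd₁ : ∀ V V' W, h (V + V') W = h V W + h V' W)
    (hsmul₁ : ∀ (a : ℂ) V W, h (a • V) W = a * h V W)
    (hadd₂ : ∀ V W W', h V (W + W') = h V W + h V W')
    (hsmul₂ : ∀ (a : ℂ) V W, h V (a • W) = starRingEnd ℂ a * h V W)
    (hherm : ∀ V W, h W V = starRingEnd ℂ (h V W))
    (hinv : ∀ V W : Matrix (Fin m) (Fin n) ℂ,
      ∀ B ∈ Matrix.unitaryGroup (Fin m) ℂ, ∀ C ∈ Matrix.unitaryGroup (Fin n) ℂ,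
        h (B * V * C) (B * W * C) = h V W) :
    ∃ c : ℝ, ∀ V W, h V W = (c : ℂ) * (V * Wᴴ).trace := by
  classical
  have h0₁ : ∀ W, h 0 W = 0 := fun W => by simpa using hsmul₁ 0 0 W
  -- degenerate cases
  rcases Nat.eq_zero_or_pos m with hm | hm
  · refine ⟨0, fun V W => ?_⟩
    subst hm
    have hV0 : V = 0 := by ext i j; exact i.elim0
    simp [hV0, h0₁]
  rcases Nat.eq_zero_or_pos n with hn | hn
  · refine ⟨0, fun V W => ?_⟩
    subst hn
    have hV0 : V = 0 := by ext i j; exact j.elim0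
    simp [hV0, h0₁]
  set i0 : Fin m := ⟨0, hm⟩
  set j0 : Fin n := ⟨0, hn⟩
  -- sum lemmas
  have hsum₁ : ∀ {ι : Type} (s : Finset ι) (f : ι → Matrix (Fin m) (Fin n) ℂ)
      (W : Matrix (Fin m) (Fin n) ℂ), h (∑ x ∈ s, f x) W = ∑ x ∈ s, h (f x) W := by
    intro ι s f W
    induction s using Finset.induction with
    | empty => simpa using h0₁ W
    | insert a s hx ih => rw [Finset.sum_insert hx, hadd₁, ih, Finset.sum_insert hx]
  have h0₂ : ∀ V, h V 0 = 0 := fun V => by simpa using hsmul₂ 0 V 0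
  have hsum₂ : ∀ {ι : Type} (s : Finset ι) (V : Matrix (Fin m) (Fin n) ℂ)
      (f : ι → Matrix (Fin m) (Fin n) ℂ), h V (∑ x ∈ s, f x) = ∑ x ∈ s, h V (f x) := by
    intro ι s V f
    induction s using Finset.induction with
    | empty => simpa using h0₂ V
    | insert a s hx ih => rw [Finset.sum_insert hx, hadd₂, ih, Finset.sum_insert hx]
  -- diagonal unitaries
  have diag_unitary : ∀ {k : ℕ} (d : Fin k → ℂ), (∀ r, d r * starRingEnd ℂ (d r) = 1) →
      Matrix.diagonal d ∈ Matrix.unitaryGroup (Fin k) ℂ := by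
    intro k d hd
    rw [Matrix.mem_unitaryGroup_iff, Matrix.star_eq_conjTranspose,
      Matrix.diagonal_conjTranspose, Matrix.diagonal_mul_diagonal]
    ext r s
    by_cases hrs : r = s <;> simp [Matrix.diagonal_apply, Matrix.one_apply, hrs, hd]
  have diag_mul : ∀ (d : Fin m → ℂ) (i : Fin m) (j : Fin n),
      Matrix.diagonal d * Matrix.single i j (1 : ℂ) = Matrix.single i j (d i) := by
    intro d i j
    ext r s
    rw [Matrix.diagonal_mul]
    by_cases hc : i = r ∧ j = s
    · obtain ⟨rfl, rfl⟩ := hc; simp [Matrix.single]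
    · simp [Matrix.single, hc]
  have mul_diag : ∀ (e : Fin n → ℂ) (i : Fin m) (j : Fin n),
      Matrix.single i j (1 : ℂ) * Matrix.diagonal e = Matrix.single i j (e j) := by
    intro e i j
    ext r s
    rw [Matrix.mul_diagonal]
    by_cases hc : i = r ∧ j = s
    · obtain ⟨rfl, rfl⟩ := hc; simp [Matrix.single]
    · simp [Matrix.single, hc]
  have hsb : ∀ (a : ℂ) (i : Fin m) (j : Fin n),
      Matrix.single i j a = a • Matrix.single i j (1 : ℂ) := by
    intro a i j; simp
  -- orthogonality: distinct rows
  have horth_row : ∀ (i k : Fin m) (j l : Fin n), i ≠ k →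
      h (Matrix.single i j (1:ℂ)) (Matrix.single k l 1) = 0 := by
    intro i k j l hik
    set d : Fin m → ℂ := fun r => if r = i then -1 else 1 with hd
    have hB : Matrix.diagonal d ∈ Matrix.unitaryGroup (Fin m) ℂ := by
      apply diag_unitary
      intro r; simp only [hd]; split_ifs <;> simp
    have key := hinv (Matrix.single i j 1) (Matrix.single k l 1) (Matrix.diagonal d) hB
      1 (one_mem _)
    rw [Matrix.mul_one, Matrix.mul_one, diag_mul, diag_mul] at key
    have hdi : d i = -1 := if_pos rfl
    have hdk : d k = 1 := if_neg (fun hh => hik hh.symm)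
    rw [hdi, hdk, hsb (-1 : ℂ), hsmul₁] at key
    linear_combination (-(1:ℂ)/2) * key
  -- orthogonality: distinct columns
  have horth_col : ∀ (i k : Fin m) (j l : Fin n), j ≠ l →
      h (Matrix.single i j (1:ℂ)) (Matrix.single k l 1) = 0 := by
    intro i k j l hjl
    set e : Fin n → ℂ := fun r => if r = j then -1 else 1 with he
    have hC : Matrix.diagonal e ∈ Matrix.unitaryGroup (Fin n) ℂ := by
      apply diag_unitary
      intro r; simp only [he]; split_ifs <;> simp
    have key := hinv (Matrix.single i j 1) (Matrix.single k l 1) 1 (one_mem _)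
      (Matrix.diagonal e) hC
    rw [Matrix.one_mul, Matrix.one_mul, mul_diag, mul_diag] at key
    have hej : e j = -1 := if_pos rfl
    have hel : e l = 1 := if_neg (fun hh => hjl hh.symm)
    rw [hej, hel, hsb (-1 : ℂ), hsmul₁] at key
    linear_combination (-(1:ℂ)/2) * key
  -- permutation unitaries
  have perm_unitary : ∀ {k : ℕ} (σ : Equiv.Perm (Fin k)),
      (σ.toPEquiv.toMatrix : Matrix (Fin k) (Fin k) ℂ) ∈ Matrix.unitaryGroup (Fin k) ℂ := by
    intro k σ
    rw [Matrix.mem_unitaryGroup_iff]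
    have hstar : star (σ.toPEquiv.toMatrix : Matrix (Fin k) (Fin k) ℂ)
        = σ.symm.toPEquiv.toMatrix := by
      rw [Equiv.toPEquiv_symm, PEquiv.toMatrix_symm]
      ext r s
      simp [Matrix.star_eq_conjTranspose, Matrix.conjTranspose_apply,
        PEquiv.toMatrix_apply, apply_ite (starRingEnd ℂ)]
    rw [hstar, ← PEquiv.toMatrix_trans, ← Equiv.toPEquiv_trans, Equiv.self_trans_symm,
      Equiv.toPEquiv_refl, PEquiv.toMatrix_refl]
  have perm_mul : ∀ (σ : Equiv.Perm (Fin m)) (a : Fin m) (b : Fin n),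
      (σ.toPEquiv.toMatrix : Matrix (Fin m) (Fin m) ℂ) * Matrix.single a b (1:ℂ)
        = Matrix.single (σ.symm a) b 1 := by
    intro σ a b
    rw [PEquiv.toMatrix_toPEquiv_mul]
    ext r s
    simp only [Matrix.submatrix_apply, Matrix.single, of_apply, id_eq]
    have hiff : (a = σ r) ↔ (σ.symm a = r) := by constructor <;> (rintro rfl; simp)
    simp only [hiff]
  have mul_perm : ∀ (τ : Equiv.Perm (Fin n)) (a : Fin m) (b : Fin n),
      Matrix.single a b (1:ℂ) * (τ.toPEquiv.toMatrix : Matrix (Fin n) (Fin n) ℂ)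
        = Matrix.single a (τ b) 1 := by
    intro τ a b
    rw [PEquiv.mul_toMatrix_toPEquiv]
    ext r s
    simp only [Matrix.submatrix_apply, Matrix.single, of_apply, id_eq]
    have hiff : (b = τ.symm s) ↔ (τ b = s) := by constructor <;> (rintro rfl; simp)
    simp only [hiff]
  set c₀ : ℂ := h (Matrix.single i0 j0 1) (Matrix.single i0 j0 1) with hc₀
  -- all diagonal values equal c₀
  have hdiagval : ∀ (i : Fin m) (j : Fin n),
      h (Matrix.single i j (1:ℂ)) (Matrix.single i j 1) = c₀ := by
    intro i j
    have key := hinv (Matrix.single i j 1) (Matrix.single i j 1)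
      ((Equiv.swap i0 i).toPEquiv.toMatrix) (perm_unitary _)
      ((Equiv.swap j0 j).toPEquiv.toMatrix) (perm_unitary _)
    rw [perm_mul, mul_perm, Equiv.symm_swap, Equiv.swap_apply_right, Equiv.swap_apply_right]
      at key
    rw [← key, hc₀]
  -- c₀ is real
  have hc₀real : (starRingEnd ℂ) c₀ = c₀ := by
    conv_lhs => rw [← hherm]
  have hc₀re : ((c₀.re : ℝ) : ℂ) = c₀ := by
    rw [← Complex.conj_eq_iff_re]; exact hc₀real
  refine ⟨c₀.re, fun V W => ?_⟩
  have hEE : ∀ (i : Fin m) (j : Fin n) (k : Fin m) (l : Fin n),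
      h (Matrix.single i j (1:ℂ)) (Matrix.single k l 1)
        = if i = k ∧ j = l then c₀ else 0 := by
    intro i j k l
    by_cases hik : i = k
    · by_cases hjl : j = l
      · subst hik; subst hjl; simp [hdiagval]
      · rw [if_neg (by tauto)]; exact horth_col i k j l hjl
    · rw [if_neg (by tauto)]; exact horth_row i k j l hik
  have htr : (V * Wᴴ).trace = ∑ i, ∑ j, V i j * starRingEnd ℂ (W i j) := by
    simp [Matrix.trace, Matrix.diag, Matrix.mul_apply, Matrix.conjTranspose_apply, mul_comm]
  calc h V W = h (∑ i, ∑ j, Matrix.single i j (V i j)) (∑ k, ∑ l, Matrix.single k l (W k l)) := by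
        rw [← matrix_eq_sum_single, ← matrix_eq_sum_single]
    _ = ∑ i, ∑ j, ∑ k, ∑ l, (V i j) * (starRingEnd ℂ (W k l)
          * h (Matrix.single i j 1) (Matrix.single k l 1)) := by
        rw [hsum₁]
        refine Finset.sum_congr rfl fun i _ => ?_
        rw [hsum₁]
        refine Finset.sum_congr rfl fun j _ => ?_
        rw [hsum₂]
        refine Finset.sum_congr rfl fun k _ => ?_
        rw [hsum₂]
        refine Finset.sum_congr rfl fun l _ => ?_
        rw [hsb (V i j), hsb (W k l), hsmul₁, hsmul₂]
    _ = ∑ i, ∑ j, V i j * (starRingEnd ℂ (W i j) * c₀) := by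
        refine Finset.sum_congr rfl fun i _ => ?_
        refine Finset.sum_congr rfl fun j _ => ?_
        simp only [hEE]
        simp [ite_and, mul_ite, Finset.sum_ite_eq]
    _ = (c₀.re : ℂ) * (V * Wᴴ).trace := by
        rw [htr, hc₀re, Finset.mul_sum]
        refine Finset.sum_congr rfl fun i _ => ?_
        rw [Finset.mul_sum]
        refine Finset.sum_congr rfl fun j _ => ?_
        ring
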